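/- Let F(x) = a(x) f(x) + b(x) g(x), where f and g have only real zeros, g strictly alternates or strictly interlaces f, deg F = deg f or deg f + 1, F and g have leading coefficients of the same sign, and b(r) < 0 for every zero r of f. Then F has only real simple zeros and f strictly interlaces or strictly alternates left of F. -/

import Mathlib

open Polynomial Finset

/-- A real polynomial has only real zeros (all its zeros are real):
the number of real roots (with multiplicity) equals the degree. -/
def RealRooted (f : Polynomial ℝ) : Prop := f.roots.card = f.natDegree

/-- A real polynomial is standard if it is zero or has positive leading coefficient. -/
def Standard (f : Polynomial ℝ) : Prop := f = 0 ∨ 0 < f.leadingCoeff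

/-- `g` alternates left of `f`: both have the same degree `n`, both are real-rooted,
and with zeros listed in nonincreasing order `r 0 ≥ r 1 ≥ …` (for `f`) and
`s 0 ≥ s 1 ≥ …` (for `g`) we have `s n ≤ r n ≤ s (n-1) ≤ … ≤ s 0 ≤ r 0`. -/
def AltLeft (g f : Polynomial ℝ) : Prop :=
  ∃ n : ℕ, ∃ r s : Fin n → ℝ,
    f = Polynomial.C f.leadingCoeff * ∏ i, (Polynomial.X - Polynomial.C (r i)) ∧
    g = Polynomial.C g.leadingCoeff * ∏ i, (Polynomial.X - Polynomial.C (s i)) ∧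
    (∀ i : Fin n, s i ≤ r i) ∧
    (∀ (i : ℕ) (h : i + 1 < n), r ⟨i + 1, h⟩ ≤ s ⟨i, Nat.lt_of_succ_lt h⟩)

/-- `g` interlaces `f`: `deg f = deg g + 1` and the zeros weakly interleave. -/
def Interlaces (g f : Polynomial ℝ) : Prop :=
  ∃ n : ℕ, ∃ r : Fin (n + 1) → ℝ, ∃ s : Fin n → ℝ,
    f = Polynomial.C f.leadingCoeff * ∏ i, (Polynomial.X - Polynomial.C (r i)) ∧
    g = Polynomial.C g.leadingCoeff * ∏ i, (Polynomial.X - Polynomial.C (s i)) ∧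
    ∀ i : Fin n, r i.succ ≤ s i ∧ s i ≤ r i.castSucc

/-- `g ⪯ f` : `g` alternates left of `f` or `g` interlaces `f`. -/
def Prec (g f : Polynomial ℝ) : Prop := AltLeft g f ∨ Interlaces g f

/-- strict alternation -/
def StrictAltLeft (g f : Polynomial ℝ) : Prop :=
  ∃ n : ℕ, ∃ r s : Fin n → ℝ,
    f = Polynomial.C f.leadingCoeff * ∏ i, (Polynomial.X - Polynomial.C (r i)) ∧
    g = Polynomial.C g.leadingCoeff * ∏ i, (Polynomial.X - Polynomial.C (s i)) ∧
    (∀ i : Fin n, s i < r i) ∧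
    (∀ (i : ℕ) (h : i + 1 < n), r ⟨i + 1, h⟩ < s ⟨i, Nat.lt_of_succ_lt h⟩)

/-- strict interlacing -/
def StrictInterlaces (g f : Polynomial ℝ) : Prop :=
  ∃ n : ℕ, ∃ r : Fin (n + 1) → ℝ, ∃ s : Fin n → ℝ,
    f = Polynomial.C f.leadingCoeff * ∏ i, (Polynomial.X - Polynomial.C (r i)) ∧
    g = Polynomial.C g.leadingCoeff * ∏ i, (Polynomial.X - Polynomial.C (s i)) ∧
    ∀ i : Fin n, r i.succ < s i ∧ s i < r i.castSucc

/-- `g ≺ f` : strict alternation or strict interlacing. -/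
def SPrec (g f : Polynomial ℝ) : Prop := StrictAltLeft g f ∨ StrictInterlaces g f

/-- PF: nonnegative coefficients and only real zeros. -/
def PFpoly (f : Polynomial ℝ) : Prop := (∀ i, 0 ≤ f.coeff i) ∧ RealRooted f


private lemma my_ivt (p : Polynomial ℝ) {x y : ℝ} (hxy : x < y)
    (h : p.eval x * p.eval y < 0) : ∃ z, x < z ∧ z < y ∧ p.eval z = 0 := by
  rcases mul_neg_iff.mp h with ⟨hx, hy⟩ | ⟨hx, hy⟩
  · have h2 := intermediate_value_Ioo' hxy.le (p.continuous.continuousOn (s := Set.Icc x y))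
    obtain ⟨z, hz, hz0⟩ := h2 ⟨hy, hx⟩
    exact ⟨z, hz.1, hz.2, hz0⟩
  · have h2 := intermediate_value_Ioo hxy.le (p.continuous.continuousOn (s := Set.Icc x y))
    obtain ⟨z, hz, hz0⟩ := h2 ⟨hx, hy⟩
    exact ⟨z, hz.1, hz.2, hz0⟩

private lemma my_exists_pos (G : Polynomial ℝ) (h1 : 0 < G.natDegree)
    (h2 : 0 < G.leadingCoeff) (y : ℝ) : ∃ x, y < x ∧ 0 < G.eval x := by
  have hdeg : 0 < G.degree := natDegree_pos_iff_degree_pos.mp h1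
  have ht := Polynomial.tendsto_atTop_of_leadingCoeff_nonneg G hdeg h2.le
  obtain ⟨x, hx1, hx2⟩ := ((ht.eventually_gt_atTop 0).and (Filter.eventually_gt_atTop y)).exists
  exact ⟨x, hx2, hx1⟩

private lemma my_chain {n : ℕ} (u : Fin n → ℝ)
    (h : ∀ (i : ℕ) (hi : i + 1 < n), u ⟨i + 1, hi⟩ < u ⟨i, Nat.lt_of_succ_lt hi⟩) :
    ∀ (j i : ℕ) (hj : j < n) (hi : i < n), i < j → u ⟨j, hj⟩ < u ⟨i, hi⟩ := by
  intro j
  induction j with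
  | zero => intro i _ _ h0; omega
  | succ k ih =>
    intro i hj hi hij
    rcases Nat.lt_or_ge i k with hik | hik
    · exact (h k hj).trans (ih i (Nat.lt_of_succ_lt hj) hi hik)
    · have hik' : i = k := by omega
      subst hik'
      exact h i hj

private lemma my_sign (n i : ℕ) (hin : i ≤ n) (x : ℝ) (s : ℕ → ℝ)
    (hA : ∀ j, j < i → x < s j) (hB : ∀ j, i ≤ j → j < n → s j < x) :
    0 < (-1 : ℝ) ^ i * ∏ j ∈ Finset.range n, (x - s j) := by
  rw [← Finset.prod_range_mul_prod_Ico _ hin]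
  have h1 : ∏ j ∈ Finset.range i, (x - s j)
      = (-1 : ℝ) ^ i * ∏ j ∈ Finset.range i, (s j - x) := by
    calc ∏ j ∈ Finset.range i, (x - s j) = ∏ j ∈ Finset.range i, ((-1) * (s j - x)) := by
          apply Finset.prod_congr rfl; intros; ring
      _ = (∏ _j ∈ Finset.range i, (-1 : ℝ)) * ∏ j ∈ Finset.range i, (s j - x) :=
          Finset.prod_mul_distrib
      _ = (-1 : ℝ) ^ i * ∏ j ∈ Finset.range i, (s j - x) := by
          rw [Finset.prod_const, Finset.card_range]
  have h2 : 0 < ∏ j ∈ Finset.range i, (s j - x) :=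
    Finset.prod_pos fun j hj => sub_pos.mpr (hA j (Finset.mem_range.mp hj))
  have h3 : 0 < ∏ j ∈ Finset.Ico i n, (x - s j) :=
    Finset.prod_pos fun j hj => sub_pos.mpr (hB j (Finset.mem_Ico.mp hj).1 (Finset.mem_Ico.mp hj).2)
  have h4 : ((-1 : ℝ) ^ i) * ((-1 : ℝ) ^ i) = 1 := by
    rw [← pow_add]; exact Even.neg_one_pow ⟨i, by ring⟩
  rw [h1]
  have h5 : (-1 : ℝ) ^ i * ((-1 : ℝ) ^ i * (∏ j ∈ Finset.range i, (s j - x)) *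
      ∏ j ∈ Finset.Ico i n, (x - s j))
      = (∏ j ∈ Finset.range i, (s j - x)) * ∏ j ∈ Finset.Ico i n, (x - s j) := by
    linear_combination ((∏ j ∈ Finset.range i, (s j - x)) * ∏ j ∈ Finset.Ico i n, (x - s j)) * h4
  rw [h5]
  exact mul_pos h2 h3

private lemma my_zero_case (F g b : Polynomial ℝ) (hb : ∀ x : ℝ, b.eval x < 0)
    (hsign : 0 < F.leadingCoeff * g.leadingCoeff) (hFeq : F = b * g) : False := by
  have hb0 : b ≠ 0 := fun h => by simpa [h] using hb 0
  have hlcb : b.leadingCoeff < 0 := by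
    rcases lt_or_ge b.leadingCoeff 0 with h | h
    · exact h
    exfalso
    have hlcb0 : 0 < b.leadingCoeff := lt_of_le_of_ne h (Ne.symm (leadingCoeff_ne_zero.mpr hb0))
    rcases Nat.eq_zero_or_pos b.natDegree with hd | hd
    · have hbC : b = C (b.coeff 0) := eq_C_of_natDegree_eq_zero hd
      have hc : b.coeff 0 = b.leadingCoeff := by rw [Polynomial.leadingCoeff, hd]
      have hev := hb 0
      rw [hbC] at hev
      simp only [eval_C] at hev
      rw [hc] at hev
      linarith
    · obtain ⟨x, _, hx⟩ := my_exists_pos b hd hlcb0 0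
      exact absurd hx (not_lt.mpr (hb x).le)
  have hl : F.leadingCoeff = b.leadingCoeff * g.leadingCoeff := by
    rw [hFeq, leadingCoeff_mul]
  rw [hl] at hsign
  nlinarith [sq_nonneg g.leadingCoeff]

private lemma hsgn_aux (F b g : Polynomial ℝ) (x : ℝ) (i n : ℕ) (hin : i ≤ n) (s' : ℕ → ℝ)
    (hge' : g.eval x = g.leadingCoeff * ∏ j ∈ Finset.range n, (x - s' j))
    (hFx : F.eval x = b.eval x * g.eval x) (hbx : b.eval x < 0)
    (hlcg : g.leadingCoeff ≠ 0)
    (hA : ∀ j, j < i → x < s' j) (hB : ∀ j, i ≤ j → j < n → s' j < x) :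
    0 < g.leadingCoeff * (-1 : ℝ) ^ (i + 1) * F.eval x := by
  have hcl := my_sign n i hin x s' hA hB
  have hkey : g.leadingCoeff * (-1 : ℝ) ^ (i + 1) * F.eval x
      = (g.leadingCoeff * g.leadingCoeff) * (-(b.eval x)) *
        ((-1 : ℝ) ^ i * ∏ j ∈ Finset.range n, (x - s' j)) := by
    rw [hFx, hge']; ring
  rw [hkey]
  exact mul_pos (mul_pos (mul_self_pos.mpr hlcg) (neg_pos.mpr hbx)) hcl

private lemma my_master (m : ℕ) (r : Fin m → ℝ)
    (hr : ∀ i j : Fin m, i < j → r j < r i)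
    (F f : Polynomial ℝ) (σ : ℝ)
    (hσF : 0 < σ * F.leadingCoeff)
    (hdeg : F.natDegree = m ∨ F.natDegree = m + 1)
    (hsgn : ∀ i : Fin m, 0 < σ * (-1 : ℝ) ^ ((i : ℕ) + 1) * F.eval (r i))
    (hffact : f = C f.leadingCoeff * ∏ i, (X - C (r i))) :
    (F.roots.card = F.natDegree) ∧ F.roots.Nodup ∧
      ((∃ n : ℕ, ∃ rr ss : Fin n → ℝ,
        F = C F.leadingCoeff * ∏ i, (X - C (rr i)) ∧
        f = C f.leadingCoeff * ∏ i, (X - C (ss i)) ∧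
        (∀ i : Fin n, ss i < rr i) ∧
        (∀ (i : ℕ) (h : i + 1 < n), rr ⟨i + 1, h⟩ < ss ⟨i, Nat.lt_of_succ_lt h⟩)) ∨
      (∃ n : ℕ, ∃ rr : Fin (n + 1) → ℝ, ∃ ss : Fin n → ℝ,
        F = C F.leadingCoeff * ∏ i, (X - C (rr i)) ∧
        f = C f.leadingCoeff * ∏ i, (X - C (ss i)) ∧
        ∀ i : Fin n, rr i.succ < ss i ∧ ss i < rr i.castSucc)) := by
  have hσ : σ ≠ 0 := fun h => by simp [h] at hσF
  have hlcF : F.leadingCoeff ≠ 0 := fun h => by simp [h] at hσF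
  have hF0 : F ≠ 0 := leadingCoeff_ne_zero.mp hlcF
  obtain ⟨c, hc⟩ : ∃ c, F.leadingCoeff = c := ⟨_, rfl⟩
  have hc0 : c ≠ 0 := hc ▸ hlcF
  have hσc : 0 < σ * c := hc ▸ hσF
  -- Step A : find roots of F, one above each r i (and below all r j for j < i)
  have exT : ∀ i : Fin m, ∃ x, r i < x ∧ F.eval x = 0 ∧ ∀ j : Fin m, j < i → x < r j := by
    rintro ⟨iv, hiv⟩
    rcases Nat.eq_zero_or_pos iv with h0 | hpos
    · subst h0
      have hGdeg : (C σ * F).natDegree = F.natDegree := natDegree_C_mul hσ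
      have hGlc : (C σ * F).leadingCoeff = σ * F.leadingCoeff := by
        rw [leadingCoeff_mul, leadingCoeff_C]
      have hm1 : 0 < m := hiv
      have hnd : 0 < F.natDegree := by rcases hdeg with h | h <;> omega
      obtain ⟨M, hM1, hM2⟩ := my_exists_pos (C σ * F) (hGdeg ▸ hnd) (hGlc ▸ hσF) (r ⟨0, hiv⟩)
      have hGr : (C σ * F).eval (r ⟨0, hiv⟩) < 0 := by
        have h1 := hsgn ⟨0, hiv⟩
        simp only [Fin.val_mk, zero_add, pow_one] at h1
        simp only [eval_mul, eval_C]
        nlinarith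
      obtain ⟨z, hz1, hz2, hz3⟩ := my_ivt (C σ * F) hM1 (mul_neg_of_neg_of_pos hGr hM2)
      refine ⟨z, hz1, ?_, ?_⟩
      · simp only [eval_mul, eval_C] at hz3
        exact (mul_eq_zero.mp hz3).resolve_left hσ
      · intro j hj
        exact absurd hj (by simp [Fin.lt_def])
    · obtain ⟨k, rfl⟩ := Nat.exists_eq_succ_of_ne_zero hpos.ne'
      have hkm : k < m := Nat.lt_of_succ_lt hiv
      have hlt : r ⟨k + 1, hiv⟩ < r ⟨k, hkm⟩ :=
        hr ⟨k, hkm⟩ ⟨k + 1, hiv⟩ (Fin.mk_lt_mk.mpr (Nat.lt_succ_self k))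
      have h1 := hsgn ⟨k, hkm⟩
      have h2 := hsgn ⟨k + 1, hiv⟩
      simp only [Fin.val_mk] at h1 h2
      rw [pow_succ ((-1 : ℝ)) (k + 1)] at h2
      have hσ2 : 0 < σ * σ := mul_self_pos.mpr hσ
      have hprod := mul_pos h1 h2
      have he : ((-1 : ℝ) ^ (k + 1)) * ((-1 : ℝ) ^ (k + 1)) = 1 := by
        rw [← pow_add]; exact Even.neg_one_pow ⟨k + 1, by ring⟩
      have heq : (σ * (-1 : ℝ) ^ (k + 1) * F.eval (r ⟨k, hkm⟩)) *
          (σ * ((-1 : ℝ) ^ (k + 1) * (-1)) * F.eval (r ⟨k + 1, hiv⟩))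
          = -((σ * σ) * (F.eval (r ⟨k + 1, hiv⟩) * F.eval (r ⟨k, hkm⟩))) := by
        linear_combination (-(σ * σ * F.eval (r ⟨k, hkm⟩) * F.eval (r ⟨k + 1, hiv⟩))) * he
      rw [heq] at hprod
      have hmulneg : F.eval (r ⟨k + 1, hiv⟩) * F.eval (r ⟨k, hkm⟩) < 0 := by nlinarith
      obtain ⟨z, hz1, hz2, hz3⟩ := my_ivt F hlt hmulneg
      refine ⟨z, hz1, hz3, ?_⟩
      intro j hj
      have hjk : (j : ℕ) < k + 1 := hj
      have hle : r ⟨k, hkm⟩ ≤ r j := by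
        rcases Nat.lt_or_ge (j : ℕ) k with h | h
        · exact (my_chain r
            (fun i hi => hr ⟨i, Nat.lt_of_succ_lt hi⟩ ⟨i + 1, hi⟩
              (Fin.mk_lt_mk.mpr (Nat.lt_succ_self i))) k (j : ℕ) hkm j.2 h).le
        · have hje : j = (⟨k, hkm⟩ : Fin m) := Fin.ext (show (j : ℕ) = k by omega)
          rw [hje]
      exact hz2.trans_le hle
  choose t ht1 ht2 ht3 using exT
  have hrcons : ∀ (i : ℕ) (hi : i + 1 < m),
      r ⟨i + 1, hi⟩ < r ⟨i, Nat.lt_of_succ_lt hi⟩ :=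
    fun i hi => hr ⟨i, Nat.lt_of_succ_lt hi⟩ ⟨i + 1, hi⟩ (Fin.mk_lt_mk.mpr (Nat.lt_succ_self i))
  have tanti : ∀ i j : Fin m, i < j → t j < t i := fun i j hij => (ht3 j i hij).trans (ht1 i)
  have tinj : Function.Injective t := by
    intro i j hij
    rcases lt_trichotomy i j with h | h | h
    · exact absurd hij (tanti i j h).ne'
    · exact h
    · exact absurd hij (tanti j i h).ne
  have hScard : Multiset.card (Finset.univ.val.map t) = m := by simp
  have hSnodup : (Finset.univ.val.map t).Nodup := Finset.univ.nodup.map tinj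
  have hSle : Finset.univ.val.map t ≤ F.roots := by
    rw [Multiset.le_iff_count]
    intro x
    by_cases hx : x ∈ Finset.univ.val.map t
    · rw [Multiset.count_eq_one_of_mem hSnodup hx]
      obtain ⟨i, _, rfl⟩ := Multiset.mem_map.mp hx
      exact Multiset.one_le_count_iff_mem.mpr (mem_roots'.mpr ⟨hF0, ht2 i⟩)
    · rw [Multiset.count_eq_zero_of_notMem hx]
      exact Nat.zero_le _
  have hPmap : (∏ i, (X - C (t i))) = ((Finset.univ.val.map t).map fun a => X - C a).prod := by
    rw [Multiset.map_map]; rfl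
  have hPmonic : (∏ i, (X - C (t i))).Monic :=
    monic_prod_of_monic _ _ fun i _ => monic_X_sub_C (t i)
  have hPdeg : (∏ i, (X - C (t i))).natDegree = m := by
    rw [natDegree_prod _ _ fun i _ => X_sub_C_ne_zero (t i)]
    simp
  have hProots : (∏ i, (X - C (t i))).roots = Finset.univ.val.map t := by
    rw [hPmap]; exact roots_multiset_prod_X_sub_C _
  have hPdvd : (∏ i, (X - C (t i))) ∣ F := by
    rw [hPmap]
    exact (Multiset.prod_dvd_prod_of_le (Multiset.map_le_map hSle)).trans
      (prod_multiset_X_sub_C_dvd F)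
  obtain ⟨q, hq⟩ := hPdvd
  have hq0 : q ≠ 0 := by rintro rfl; rw [mul_zero] at hq; exact hF0 hq
  have hlcq : q.leadingCoeff = c := by
    rw [← hc, hq, leadingCoeff_mul, hPmonic.leadingCoeff, one_mul]
  have hqdeg : F.natDegree = m + q.natDegree := by
    rw [hq, natDegree_mul hPmonic.ne_zero hq0, hPdeg]
  rcases hdeg with hdm | hdm
  · -- deg F = m
    have hq0' : q.natDegree = 0 := by omega
    have hqC : q = Polynomial.C c := by
      have h := eq_C_of_natDegree_eq_zero hq0'
      have hcq : q.coeff 0 = q.leadingCoeff := by rw [Polynomial.leadingCoeff, hq0']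
      rw [hcq, hlcq] at h
      exact h
    have hFfact : F = C c * ∏ i, (X - C (t i)) := by
      rw [hq, hqC]; ring
    have hFroots : F.roots = Finset.univ.val.map t := by
      rw [hFfact, roots_C_mul _ hc0, hProots]
    refine ⟨by rw [hFroots, hScard, hdm], by rw [hFroots]; exact hSnodup, Or.inl ?_⟩
    exact ⟨m, t, r, by rw [hc]; exact hFfact, hffact, ht1,
      fun i h => ht3 ⟨i + 1, h⟩ ⟨i, Nat.lt_of_succ_lt h⟩ (Fin.mk_lt_mk.mpr (Nat.lt_succ_self i))⟩
  · -- deg F = m + 1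
    have hq1 : q.natDegree = 1 := by omega
    have ha : q.coeff 1 = c := by rw [← hlcq, Polynomial.leadingCoeff, hq1]
    have ha0 : q.coeff 1 ≠ 0 := ha ▸ hc0
    set w : ℝ := -(q.coeff 0) / q.coeff 1 with hw
    have haw : q.coeff 1 * w = -(q.coeff 0) := by rw [hw]; field_simp
    have hqw : q = C (q.coeff 1) * (X - C w) := by
      have h := eq_X_add_C_of_natDegree_le_one hq1.le
      have h2 : C (q.coeff 1) * (X - C w) = C (q.coeff 1) * X + C (q.coeff 0) := by
        rw [mul_sub, ← C_mul, haw, map_neg]; ring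
      rw [h2]; exact h
    have hFfact : F = C c * ((∏ i, (X - C (t i))) * (X - C w)) := by
      rw [hq, hqw, ha]; ring
    have hroots : F.roots = Finset.univ.val.map t + {w} := by
      rw [hFfact, roots_C_mul _ hc0,
        roots_mul (mul_ne_zero hPmonic.ne_zero (X_sub_C_ne_zero w)), hProots, roots_X_sub_C]
    -- w is below the last r (when m > 0)
    have hwlt : ∀ _hm : 0 < m, w < r ⟨m - 1, by omega⟩ := by
      intro hm
      have hL : m - 1 < m := by omega
      have hsg : 0 < σ * (-1 : ℝ) ^ m * F.eval (r ⟨m - 1, hL⟩) := by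
        have h0 := hsgn ⟨m - 1, hL⟩
        have hmm : ((⟨m - 1, hL⟩ : Fin m) : ℕ) + 1 = m := by show m - 1 + 1 = m; omega
        rw [hmm] at h0
        exact h0
      set t' : ℕ → ℝ := fun j => if h : j < m then t ⟨j, h⟩ else 0 with ht'
      have hPe : (∏ i, (X - C (t i))).eval (r ⟨m - 1, hL⟩)
          = ∏ j ∈ Finset.range m, (r ⟨m - 1, hL⟩ - t' j) := by
        calc (∏ i, (X - C (t i))).eval (r ⟨m - 1, hL⟩)
            = ∏ i : Fin m, (fun j : ℕ => r ⟨m - 1, hL⟩ - t' j) (i : ℕ) := by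
              rw [eval_prod]
              apply Finset.prod_congr rfl
              intro i _
              simp [ht', i.2]
          _ = ∏ j ∈ Finset.range m, (r ⟨m - 1, hL⟩ - t' j) :=
              Fin.prod_univ_eq_prod_range (fun j : ℕ => r ⟨m - 1, hL⟩ - t' j) m
      have hsignP : 0 < (-1 : ℝ) ^ m * ∏ j ∈ Finset.range m, (r ⟨m - 1, hL⟩ - t' j) := by
        apply my_sign m m le_rfl
        · intro j hj
          have hle : r ⟨m - 1, hL⟩ ≤ r ⟨j, hj⟩ := by
            rcases Nat.lt_or_ge j (m - 1) with h | h
            · exact (my_chain r hrcons (m - 1) j hL hj h).le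
            · have hje : (⟨j, hj⟩ : Fin m) = ⟨m - 1, hL⟩ := Fin.ext (show j = m - 1 by omega)
              rw [hje]
          have ht'j : t' j = t ⟨j, hj⟩ := by simp [ht', hj]
          rw [ht'j]
          exact lt_of_le_of_lt hle (ht1 ⟨j, hj⟩)
        · intro j hj1 hj2; omega
      have hFe : F.eval (r ⟨m - 1, hL⟩) = c *
          ((∏ j ∈ Finset.range m, (r ⟨m - 1, hL⟩ - t' j)) * (r ⟨m - 1, hL⟩ - w)) := by
        rw [hFfact, eval_mul, eval_C, eval_mul, eval_sub, eval_X, eval_C, hPe]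
      rw [hFe] at hsg
      have key : 0 < (σ * c) *
          (((-1 : ℝ) ^ m * ∏ j ∈ Finset.range m, (r ⟨m - 1, hL⟩ - t' j)) *
            (r ⟨m - 1, hL⟩ - w)) := by linear_combination hsg
      nlinarith [mul_pos hσc hsignP]
    have hwne : ∀ i : Fin m, w ≠ t i := by
      intro i
      have hm : 0 < m := i.pos
      have hle : r ⟨m - 1, by omega⟩ ≤ r i := by
        rcases Nat.lt_or_ge (i : ℕ) (m - 1) with h | h
        · exact (my_chain r hrcons (m - 1) (i : ℕ) (by omega) i.2 h).le
        · have hie : i = (⟨m - 1, by omega⟩ : Fin m) :=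
            Fin.ext (show (i : ℕ) = m - 1 by have := i.2; omega)
          rw [hie]
      exact (lt_of_lt_of_le (hwlt hm) (hle.trans (ht1 i).le)).ne
    have hprodsplit : (∏ j : Fin (m + 1),
        (X - C (if h : (j : ℕ) < m then t ⟨(j : ℕ), h⟩ else w)))
        = (∏ i, (X - C (t i))) * (X - C w) := by
      rw [Fin.prod_univ_castSucc]
      congr 1
      · apply Finset.prod_congr rfl
        intro i _
        have hv : ((i.castSucc : Fin (m + 1)) : ℕ) = (i : ℕ) := rfl
        rw [hv, dif_pos i.2]
      · rw [show ((Fin.last m : Fin (m + 1)) : ℕ) = m from rfl, dif_neg (lt_irrefl m)]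
    refine ⟨?_, ?_, Or.inr ?_⟩
    · rw [hroots, hdm]
      simp
    · rw [hroots, add_comm, Multiset.singleton_add, Multiset.nodup_cons]
      refine ⟨?_, hSnodup⟩
      intro hx
      obtain ⟨i, _, hti⟩ := Multiset.mem_map.mp hx
      exact hwne i hti.symm
    · refine ⟨m, (fun j : Fin (m + 1) => if h : (j : ℕ) < m then t ⟨(j : ℕ), h⟩ else w), r,
        ?_, hffact, ?_⟩
      · rw [hc, hprodsplit]; exact hFfact
      · intro i
        constructor
        · show (if h : ((i.succ : Fin (m + 1)) : ℕ) < m then t ⟨_, h⟩ else w) < r i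
          have hv : ((i.succ : Fin (m + 1)) : ℕ) = (i : ℕ) + 1 := rfl
          by_cases h : (i : ℕ) + 1 < m
          · rw [hv, dif_pos h]
            exact ht3 ⟨(i : ℕ) + 1, h⟩ i (Fin.lt_def.mpr (Nat.lt_succ_self _))
          · rw [hv, dif_neg h]
            have hieq : i = (⟨m - 1, by have := i.2; omega⟩ : Fin m) :=
              Fin.ext (show (i : ℕ) = m - 1 by have := i.2; omega)
            rw [hieq]
            exact hwlt i.pos
        · show r i < (if h : ((i.castSucc : Fin (m + 1)) : ℕ) < m then t ⟨_, h⟩ else w)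
          have hv : ((i.castSucc : Fin (m + 1)) : ℕ) = (i : ℕ) := rfl
          rw [hv, dif_pos i.2]
          exact ht1 i

theorem thm_Ffg_strict (F f g a b : Polynomial ℝ)
    (hF : F = a * f + b * g)
    (hf : RealRooted f) (hg : RealRooted g) (hgf : SPrec g f)
    (hdeg : F.natDegree = f.natDegree ∨ F.natDegree = f.natDegree + 1)
    (hsign : 0 < F.leadingCoeff * g.leadingCoeff)
    (hb : ∀ r : ℝ, f.IsRoot r → b.eval r < 0) :
    RealRooted F ∧ F.roots.Nodup ∧ SPrec f F := by
  have hlcg : g.leadingCoeff ≠ 0 := by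
    intro h; rw [h, mul_zero] at hsign; exact lt_irrefl 0 hsign
  have hσF : 0 < g.leadingCoeff * F.leadingCoeff := by rw [mul_comm] at hsign; exact hsign
  rcases hgf with ⟨n, r, s, hfe, hge, hs1, hs2⟩ | ⟨n, r, s, hfe, hge, hmid⟩
  · -- strict alternation case : deg f = n
    by_cases hlcf : f.leadingCoeff = 0
    · exfalso
      have hf0 : f = 0 := by rw [hfe, hlcf, map_zero, zero_mul]
      refine my_zero_case F g b (fun x => hb x ?_) hsign (by rw [hF, hf0, mul_zero, zero_add])
      rw [hf0]; simp [IsRoot]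
    · have hndf : f.natDegree = n := by
        rw [hfe, natDegree_C_mul hlcf, natDegree_prod _ _ fun i _ => X_sub_C_ne_zero _]
        simp
      have hrc : ∀ (k : ℕ) (hk : k + 1 < n), r ⟨k + 1, hk⟩ < r ⟨k, Nat.lt_of_succ_lt hk⟩ :=
        fun k hk => (hs2 k hk).trans (hs1 _)
      have hsc : ∀ (k : ℕ) (hk : k + 1 < n), s ⟨k + 1, hk⟩ < s ⟨k, Nat.lt_of_succ_lt hk⟩ :=
        fun k hk => (hs1 ⟨k + 1, hk⟩).trans (hs2 k hk)
      have hrF : ∀ i j : Fin n, i < j → r j < r i := by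
        intro i j hij
        have h2 := my_chain r hrc (j : ℕ) (i : ℕ) j.2 i.2 hij
        simpa using h2
      refine my_master n r hrF F f g.leadingCoeff hσF (by rw [hndf] at hdeg; exact hdeg) ?_ hfe
      intro i
      have hfr : f.eval (r i) = 0 := by
        rw [hfe, eval_mul, eval_prod]
        exact mul_eq_zero_of_right _ (Finset.prod_eq_zero (Finset.mem_univ i) (by simp))
      have hFx : F.eval (r i) = b.eval (r i) * g.eval (r i) := by
        rw [hF, eval_add, eval_mul, eval_mul, hfr, mul_zero, zero_add]
      set s' : ℕ → ℝ := fun j => if h : j < n then s ⟨j, h⟩ else 0 with hs'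
      have hge' : g.eval (r i) = g.leadingCoeff * ∏ j ∈ Finset.range n, (r i - s' j) := by
        conv_lhs => rw [hge]
        rw [eval_mul, eval_C, eval_prod]
        congr 1
        calc ∏ j : Fin n, (X - C (s j)).eval (r i)
            = ∏ j : Fin n, (fun k : ℕ => r i - s' k) (j : ℕ) := by
              apply Finset.prod_congr rfl; intro j _; simp [hs', j.2]
          _ = ∏ j ∈ Finset.range n, (r i - s' j) :=
              Fin.prod_univ_eq_prod_range (fun k : ℕ => r i - s' k) n
      apply hsgn_aux F b g (r i) (i : ℕ) n i.2.le s' hge' hFx (hb (r i) hfr) hlcg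
      · -- hA
        intro j hj
        have hjn : j < n := lt_trans hj i.2
        have hin1 : (i : ℕ) - 1 < n := by have := i.2; omega
        have h2 : r i < s ⟨(i : ℕ) - 1, hin1⟩ := by
          have h' : (i : ℕ) - 1 + 1 < n := by have := i.2; omega
          have h3 := hs2 ((i : ℕ) - 1) h'
          have hre : (⟨(i : ℕ) - 1 + 1, h'⟩ : Fin n) = i :=
            Fin.ext (show (i : ℕ) - 1 + 1 = (i : ℕ) by omega)
          rwa [hre] at h3
        have h1 : s ⟨(i : ℕ) - 1, hin1⟩ ≤ s ⟨j, hjn⟩ := by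
          rcases Nat.lt_or_ge j ((i : ℕ) - 1) with h | h
          · exact (my_chain s hsc ((i : ℕ) - 1) j hin1 hjn h).le
          · have hje : (⟨j, hjn⟩ : Fin n) = ⟨(i : ℕ) - 1, hin1⟩ :=
              Fin.ext (show j = (i : ℕ) - 1 by omega)
            rw [hje]
        have hs'j : s' j = s ⟨j, hjn⟩ := by simp [hs', hjn]
        rw [hs'j]
        linarith
      · -- hB
        intro j hij hjn
        have hs'j : s' j = s ⟨j, hjn⟩ := by simp [hs', hjn]
        rw [hs'j]
        have h1 : s ⟨j, hjn⟩ ≤ s i := by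
          rcases Nat.lt_or_ge (i : ℕ) j with h | h
          · have h2 := my_chain s hsc j (i : ℕ) hjn i.2 h
            simpa using h2.le
          · have hje : (⟨j, hjn⟩ : Fin n) = i := Fin.ext (show j = (i : ℕ) by omega)
            rw [hje]
        exact lt_of_le_of_lt h1 (hs1 i)
  · -- strict interlacing case : deg f = n + 1
    by_cases hlcf : f.leadingCoeff = 0
    · exfalso
      have hf0 : f = 0 := by rw [hfe, hlcf, map_zero, zero_mul]
      refine my_zero_case F g b (fun x => hb x ?_) hsign (by rw [hF, hf0, mul_zero, zero_add])
      rw [hf0]; simp [IsRoot]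
    · have hndf : f.natDegree = n + 1 := by
        rw [hfe, natDegree_C_mul hlcf, natDegree_prod _ _ fun i _ => X_sub_C_ne_zero _]
        simp
      have hrc : ∀ (k : ℕ) (hk : k + 1 < n + 1),
          r ⟨k + 1, hk⟩ < r ⟨k, Nat.lt_of_succ_lt hk⟩ := by
        intro k hk
        have hkn : k < n := by omega
        have h1 := (hmid ⟨k, hkn⟩).1
        have h2 := (hmid ⟨k, hkn⟩).2
        have e1 : (⟨k, hkn⟩ : Fin n).succ = (⟨k + 1, hk⟩ : Fin (n + 1)) := Fin.ext rfl
        have e2 : (⟨k, hkn⟩ : Fin n).castSucc = (⟨k, Nat.lt_of_succ_lt hk⟩ : Fin (n + 1)) :=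
          Fin.ext rfl
        rw [e1] at h1; rw [e2] at h2
        exact h1.trans h2
      have hsc : ∀ (k : ℕ) (hk : k + 1 < n), s ⟨k + 1, hk⟩ < s ⟨k, Nat.lt_of_succ_lt hk⟩ := by
        intro k hk
        have h1 := (hmid ⟨k + 1, hk⟩).2
        have h2 := (hmid ⟨k, Nat.lt_of_succ_lt hk⟩).1
        have e1 : (⟨k + 1, hk⟩ : Fin n).castSucc = (⟨k, Nat.lt_of_succ_lt hk⟩ : Fin n).succ :=
          Fin.ext rfl
        rw [e1] at h1
        exact h1.trans h2
      have hrF : ∀ i j : Fin (n + 1), i < j → r j < r i := by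
        intro i j hij
        have h2 := my_chain r hrc (j : ℕ) (i : ℕ) j.2 i.2 hij
        simpa using h2
      refine my_master (n + 1) r hrF F f g.leadingCoeff hσF
        (by rw [hndf] at hdeg; exact hdeg) ?_ hfe
      intro i
      have hfr : f.eval (r i) = 0 := by
        rw [hfe, eval_mul, eval_prod]
        exact mul_eq_zero_of_right _ (Finset.prod_eq_zero (Finset.mem_univ i) (by simp))
      have hFx : F.eval (r i) = b.eval (r i) * g.eval (r i) := by
        rw [hF, eval_add, eval_mul, eval_mul, hfr, mul_zero, zero_add]
      set s' : ℕ → ℝ := fun j => if h : j < n then s ⟨j, h⟩ else 0 with hs'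
      have hge' : g.eval (r i) = g.leadingCoeff * ∏ j ∈ Finset.range n, (r i - s' j) := by
        conv_lhs => rw [hge]
        rw [eval_mul, eval_C, eval_prod]
        congr 1
        calc ∏ j : Fin n, (X - C (s j)).eval (r i)
            = ∏ j : Fin n, (fun k : ℕ => r i - s' k) (j : ℕ) := by
              apply Finset.prod_congr rfl; intro j _; simp [hs', j.2]
          _ = ∏ j ∈ Finset.range n, (r i - s' j) :=
              Fin.prod_univ_eq_prod_range (fun k : ℕ => r i - s' k) n
      have hin : (i : ℕ) ≤ n := Nat.lt_succ_iff.mp i.2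
      apply hsgn_aux F b g (r i) (i : ℕ) n hin s' hge' hFx (hb (r i) hfr) hlcg
      · -- hA
        intro j hj
        have hjn : j < n := by omega
        have hin1 : (i : ℕ) - 1 < n := by omega
        have h2 : r i < s ⟨(i : ℕ) - 1, hin1⟩ := by
          have h3 := (hmid ⟨(i : ℕ) - 1, hin1⟩).1
          have hre : (⟨(i : ℕ) - 1, hin1⟩ : Fin n).succ = i :=
            Fin.ext (show (i : ℕ) - 1 + 1 = (i : ℕ) by omega)
          rwa [hre] at h3
        have h1 : s ⟨(i : ℕ) - 1, hin1⟩ ≤ s ⟨j, hjn⟩ := by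
          rcases Nat.lt_or_ge j ((i : ℕ) - 1) with h | h
          · exact (my_chain s hsc ((i : ℕ) - 1) j hin1 hjn h).le
          · have hje : (⟨j, hjn⟩ : Fin n) = ⟨(i : ℕ) - 1, hin1⟩ :=
              Fin.ext (show j = (i : ℕ) - 1 by omega)
            rw [hje]
        have hs'j : s' j = s ⟨j, hjn⟩ := by simp [hs', hjn]
        rw [hs'j]
        linarith
      · -- hB
        intro j hij hjn
        have hs'j : s' j = s ⟨j, hjn⟩ := by simp [hs', hjn]
        rw [hs'j]
        have hiln : (i : ℕ) < n := lt_of_le_of_lt hij hjn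
        have h1 : s ⟨j, hjn⟩ ≤ s ⟨(i : ℕ), hiln⟩ := by
          rcases Nat.lt_or_ge (i : ℕ) j with h | h
          · exact (my_chain s hsc j (i : ℕ) hjn hiln h).le
          · have hje : (⟨j, hjn⟩ : Fin n) = ⟨(i : ℕ), hiln⟩ :=
              Fin.ext (show j = (i : ℕ) by omega)
            rw [hje]
        have h2 : s ⟨(i : ℕ), hiln⟩ < r i := by
          have h3 := (hmid ⟨(i : ℕ), hiln⟩).2
          have hre : (⟨(i : ℕ), hiln⟩ : Fin n).castSucc = i := Fin.ext rfl
          rwa [hre] at h3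
        exact lt_of_le_of_lt h1 h2
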